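/- Let I, J, L be sets and f a bounded complex function on I × J × L. Suppose (a) f is a strongly compact matrix when viewed as a matrix with row index set L and column index set I × J, and (b) for every fixed a ∈ L, the section (i,j) ↦ f(i,j,a) is a strongly compact matrix on I × J. Then f is a strongly compact matrix when viewed as a matrix with row index set I and column index set J × L. -/

import Mathlib

open Set Filter

lemma tb_iff {I J : Type*} (f : I → J → ℂ) :
    TotallyBounded (Set.range fun i => (UniformFun.ofFun (f i) : UniformFun J ℂ)) ↔
    ∀ ε : ℝ, 0 < ε → ∃ T : Finset I, ∀ i, ∃ i' ∈ T, ∀ j, dist (f i j) (f i' j) < ε := by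
  classical
  rw [(UniformFun.hasBasis_uniformity J ℂ).totallyBounded_iff]
  constructor
  · intro h ε hε
    by_cases hI : Nonempty I
    · obtain ⟨i₀⟩ := hI
      obtain ⟨c, hcfin, hc⟩ := h _ (Metric.dist_mem_uniformity (half_pos hε))
      set pick : UniformFun J ℂ → I := fun y =>
        if hy : ∃ i, ∀ j, dist (f i j) (UniformFun.toFun y j) < ε / 2 then hy.choose else i₀
      refine ⟨hcfin.toFinset.image pick, fun i => ?_⟩
      obtain ⟨y, hyc, hy⟩ := Set.mem_iUnion₂.1 (hc ⟨i, rfl⟩)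
      have hyex : ∃ i, ∀ j, dist (f i j) (UniformFun.toFun y j) < ε / 2 := ⟨i, hy⟩
      refine ⟨pick y, Finset.mem_image_of_mem _ (hcfin.mem_toFinset.2 hyc), fun j => ?_⟩
      have h2 : ∀ j, dist (f (pick y) j) (UniformFun.toFun y j) < ε / 2 := by
        simpa [pick, hyex] using hyex.choose_spec
      calc dist (f i j) (f (pick y) j)
          ≤ dist (f i j) (UniformFun.toFun y j) + dist (f (pick y) j) (UniformFun.toFun y j) :=
            dist_triangle_right _ _ _
        _ < ε / 2 + ε / 2 := add_lt_add (hy j) (h2 j)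
        _ = ε := add_halves ε
    · exact ⟨∅, fun i => absurd ⟨i⟩ hI⟩
  · intro h V hV
    obtain ⟨ε, hε, hball⟩ := Metric.mem_uniformity_dist.1 hV
    obtain ⟨T, hT⟩ := h ε hε
    refine ⟨(fun i => (UniformFun.ofFun (f i) : UniformFun J ℂ)) '' T, (T.finite_toSet.image _), ?_⟩
    rintro _ ⟨i, rfl⟩
    obtain ⟨i', hi'T, hi'⟩ := hT i
    exact Set.mem_biUnion ⟨i', hi'T, rfl⟩ (fun j => hball (hi' j))

lemma net_finset {I J L : Type*} (f : I → J → L → ℂ)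
    (h2 : ∀ a : L, ∀ ε : ℝ, 0 < ε → ∃ T : Finset I, ∀ i, ∃ i' ∈ T,
      ∀ j, dist (f i j a) (f i' j a) < ε) :
    ∀ (A : Finset L) (ε : ℝ), 0 < ε → ∃ T : Finset I, ∀ i, ∃ i' ∈ T,
      ∀ a ∈ A, ∀ j, dist (f i j a) (f i' j a) < ε := by
  classical
  intro A
  induction A using Finset.induction_on with
  | empty =>
    intro ε hε
    by_cases hI : Nonempty I
    · obtain ⟨i₀⟩ := hI
      exact ⟨{i₀}, fun i => ⟨i₀, Finset.mem_singleton_self i₀, by simp⟩⟩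
    · exact ⟨∅, fun i => absurd ⟨i⟩ hI⟩
  | @insert a A ha ih =>
    intro ε hε
    obtain ⟨T₁, hT₁⟩ := ih (ε / 2) (half_pos hε)
    obtain ⟨T₂, hT₂⟩ := h2 a (ε / 2) (half_pos hε)
    set P : I × I → I → Prop := fun p i =>
      (∀ b ∈ A, ∀ j, dist (f i j b) (f p.1 j b) < ε / 2) ∧
      (∀ j, dist (f i j a) (f p.2 j a) < ε / 2) with hP
    set pick : I × I → I := fun p => if h : ∃ i, P p i then h.choose else p.1 with hpick
    refine ⟨(T₁ ×ˢ T₂).image pick, fun i => ?_⟩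
    obtain ⟨t₁, ht₁T, ht₁⟩ := hT₁ i
    obtain ⟨t₂, ht₂T, ht₂⟩ := hT₂ i
    have hex : ∃ i', P (t₁, t₂) i' := ⟨i, ht₁, ht₂⟩
    refine ⟨pick (t₁, t₂),
      Finset.mem_image_of_mem _ (Finset.mem_product.2 ⟨ht₁T, ht₂T⟩), ?_⟩
    have hspec : P (t₁, t₂) (pick (t₁, t₂)) := by
      simpa [pick, hex] using hex.choose_spec
    intro b hb j
    rcases Finset.mem_insert.1 hb with rfl | hbA
    · calc dist (f i j b) (f (pick (t₁, t₂)) j b)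
          ≤ dist (f i j b) (f t₂ j b) + dist (f (pick (t₁, t₂)) j b) (f t₂ j b) :=
            dist_triangle_right _ _ _
        _ < ε / 2 + ε / 2 := add_lt_add (ht₂ j) (hspec.2 j)
        _ = ε := add_halves ε
    · calc dist (f i j b) (f (pick (t₁, t₂)) j b)
          ≤ dist (f i j b) (f t₁ j b) + dist (f (pick (t₁, t₂)) j b) (f t₁ j b) :=
            dist_triangle_right _ _ _
        _ < ε / 2 + ε / 2 := add_lt_add (ht₁ b hbA j) (hspec.1 b hbA j)
        _ = ε := add_halves ε

/-- A bounded complex matrix is *strongly compact* if its set of rows is totally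
bounded in `ℓ^∞` of the column index set. -/
def StronglyCompactMatrix {I J : Type*} (f : I → J → ℂ) : Prop :=
  (∃ C, ∀ i j, ‖f i j‖ ≤ C) ∧
    TotallyBounded (Set.range fun i => (UniformFun.ofFun (f i) : UniformFun J ℂ))

/-- if `f` is strongly compact as a matrix on `L` and `I × J`, and
every `a`-section is strongly compact as a matrix on `I` and `J`, then `f` is
strongly compact as a matrix on `I` and `J × L`. -/
theorem stronglyCompact_assoc {I J L : Type*} (f : I → J → L → ℂ)
    (hb : ∃ C, ∀ i j a, ‖f i j a‖ ≤ C)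
    (h1 : StronglyCompactMatrix (fun (a : L) (p : I × J) => f p.1 p.2 a))
    (h2 : ∀ a : L, StronglyCompactMatrix (fun i j => f i j a)) :
    StronglyCompactMatrix (fun (i : I) (q : J × L) => f i q.1 q.2) := by
  obtain ⟨C, hC⟩ := hb
  refine ⟨⟨C, fun i q => hC i q.1 q.2⟩, ?_⟩
  rw [tb_iff]
  intro ε hε
  have hε3 : 0 < ε / 3 := by linarith
  obtain ⟨A, hA⟩ := (tb_iff (fun (a : L) (p : I × J) => f p.1 p.2 a)).1 h1.2 (ε / 3) hε3
  obtain ⟨T, hT⟩ := net_finset f (fun a => (tb_iff (fun i j => f i j a)).1 (h2 a).2) A (ε / 3) hε3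
  refine ⟨T, fun i => ?_⟩
  obtain ⟨i', hi'T, hi'⟩ := hT i
  refine ⟨i', hi'T, fun q => ?_⟩
  obtain ⟨j, a⟩ := q
  obtain ⟨a', ha'A, ha'⟩ := hA a
  calc dist (f i j a) (f i' j a)
      ≤ dist (f i j a) (f i j a') + dist (f i j a') (f i' j a) := dist_triangle _ _ _
    _ ≤ dist (f i j a) (f i j a') +
        (dist (f i j a') (f i' j a') + dist (f i' j a') (f i' j a)) :=
          add_le_add_right (dist_triangle _ _ _) _
    _ < ε / 3 + (ε / 3 + ε / 3) := by
        have h₁ := ha' (i, j)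
        have h₂ := hi' a' ha'A j
        have h₃ : dist (f i' j a') (f i' j a) < ε / 3 := by
          rw [dist_comm]; exact ha' (i', j)
        exact add_lt_add h₁ (add_lt_add h₂ h₃)
    _ = ε := by ring
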